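/- Let C be a p×p real symmetric positive definite matrix and Λ a p×p real matrix such that I + λΛ is invertible for all λ ≥ 0. For λ ≥ 0 define M(λ) = (I + λΛ)⁻¹ C ((I + λΛ)ᵀ)⁻¹. Then the map λ ↦ M(λ) is monotone nonincreasing on [0, ∞) in the Loewner order (i.e., M(λ₁) − M(λ₂) is positive semidefinite whenever 0 ≤ λ₁ ≤ λ₂) if and only if the symmetric matrix ΛᵀC⁻¹ + C⁻¹Λ is positive semidefinite. -/

import Mathlib

open Matrix

namespace RidgeAux

variable {p : ℕ}

lemma symm_dot {Y : Matrix (Fin p) (Fin p) ℝ} (hY : Y.IsHermitian)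
    (v w : Fin p → ℝ) : v ⬝ᵥ (Y *ᵥ w) = (Y *ᵥ v) ⬝ᵥ w := by
  have hYt : Yᵀ = Y := by
    rw [← conjTranspose_eq_transpose_of_trivial]; exact hY
  rw [dotProduct_mulVec, ← vecMul_transpose, hYt]

lemma smul_posSemidef {c : ℝ} {B : Matrix (Fin p) (Fin p) ℝ} (hB : B.PosSemidef)
    (hc : 0 ≤ c) : (c • B).PosSemidef := by
  have hBt : Bᵀ = B := by rw [← conjTranspose_eq_transpose_of_trivial]; exact hB.1
  refine posSemidef_iff_dotProduct_mulVec.mpr ⟨by simp [Matrix.IsHermitian, conjTranspose_smul, hBt], fun x => ?_⟩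
  simp only [smul_mulVec, dotProduct_smul, smul_eq_mul]
  exact mul_nonneg hc (hB.dotProduct_mulVec_nonneg x)

lemma conj_posDef {D B : Matrix (Fin p) (Fin p) ℝ} (hD : D.PosDef) (hB : IsUnit B.det) :
    (Bᵀ * D * B).PosDef := by
  refine posDef_iff_dotProduct_mulVec.mpr ⟨?_, fun x hx => ?_⟩
  · have h1 : Bᵀ * D * B = Bᴴ * D * B := by rw [conjTranspose_eq_transpose_of_trivial]
    rw [h1]; exact isHermitian_conjTranspose_mul_mul B hD.1
  · have hx' : B *ᵥ x ≠ 0 := by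
      intro hc
      apply hx
      have h2 := congrArg (fun v => B⁻¹ *ᵥ v) hc
      simpa [mulVec_mulVec, nonsing_inv_mul _ hB] using h2
    have h3 := hD.dotProduct_mulVec_pos hx'
    have h4 : star x ⬝ᵥ ((Bᵀ * D * B) *ᵥ x) = star (B *ᵥ x) ⬝ᵥ (D *ᵥ (B *ᵥ x)) := by
      simp only [star_trivial, ← mulVec_mulVec]
      rw [dotProduct_mulVec x Bᵀ, vecMul_transpose]
    rw [h4]; exact h3

lemma inv_antitone {X Y : Matrix (Fin p) (Fin p) ℝ} (hX : X.PosDef) (hY : Y.PosDef)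
    (h : (X - Y).PosSemidef) : (Y⁻¹ - X⁻¹).PosSemidef := by
  refine posSemidef_iff_dotProduct_mulVec.mpr ⟨(hY.1.inv).sub (hX.1.inv), fun y => ?_⟩
  set x := X⁻¹ *ᵥ y with hx
  set u := Y⁻¹ *ᵥ y with hu
  have hXd : IsUnit X.det := hX.det_pos.ne'.isUnit
  have hYd : IsUnit Y.det := hY.det_pos.ne'.isUnit
  have hXx : X *ᵥ x = y := by rw [hx, mulVec_mulVec, mul_nonsing_inv _ hXd, one_mulVec]
  have hYu : Y *ᵥ u = y := by rw [hu, mulVec_mulVec, mul_nonsing_inv _ hYd, one_mulVec]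
  have h1 : u ⬝ᵥ (Y *ᵥ x) = y ⬝ᵥ x := by rw [symm_dot hY.1, hYu]
  have key : star y ⬝ᵥ ((Y⁻¹ - X⁻¹) *ᵥ y)
      = star (x - u) ⬝ᵥ (Y *ᵥ (x - u)) + star x ⬝ᵥ ((X - Y) *ᵥ x) := by
    simp only [star_trivial, sub_mulVec, mulVec_sub, dotProduct_sub, sub_dotProduct,
      hXx, hYu, ← hx, ← hu]
    rw [h1, dotProduct_comm u y, dotProduct_comm x y]
    ring
  rw [key]
  exact add_nonneg (hY.posSemidef.dotProduct_mulVec_nonneg _) (h.dotProduct_mulVec_nonneg x)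

end RidgeAux


/-- For symmetric positive definite `C` and a matrix `A` (called `Λ` in the
paper) with `I + λA` invertible for all `λ ≥ 0`, the map
`λ ↦ M(λ) = (I + λA)⁻¹ C ((I + λA)ᵀ)⁻¹` is monotone nonincreasing on `[0, ∞)` in the
Loewner order if and only if `AᵀC⁻¹ + C⁻¹A` is positive semidefinite. -/
theorem ridge_covariance_monotone_iff {p : ℕ}
    (C A : Matrix (Fin p) (Fin p) ℝ) (hC : C.PosDef)
    (hinv : ∀ l : ℝ, 0 ≤ l → IsUnit (1 + l • A).det)
    (M : ℝ → Matrix (Fin p) (Fin p) ℝ)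
    (hM : ∀ l : ℝ, M l = (1 + l • A)⁻¹ * C * ((1 + l • A)ᵀ)⁻¹) :
    (∀ l₁ l₂ : ℝ, 0 ≤ l₁ → l₁ ≤ l₂ → (M l₁ - M l₂).PosSemidef) ↔
      (Aᵀ * C⁻¹ + C⁻¹ * A).PosSemidef := by
  classical
  have hCdet : IsUnit C.det := hC.det_pos.ne'.isUnit
  have hCinv : (C⁻¹).PosDef := hC.inv
  set S := Aᵀ * C⁻¹ + C⁻¹ * A with hS
  set Q := Aᵀ * C⁻¹ * A with hQdef
  set N : ℝ → Matrix (Fin p) (Fin p) ℝ := fun l => (1 + l • A)ᵀ * C⁻¹ * (1 + l • A) with hNdef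
  have hQ : Q.PosSemidef := by
    have h := hCinv.posSemidef.conjTranspose_mul_mul_same A
    rwa [conjTranspose_eq_transpose_of_trivial] at h
  have hN : ∀ l : ℝ, N l = C⁻¹ + l • S + (l * l) • Q := by
    intro l
    simp only [hNdef, hS, hQdef, transpose_add, transpose_smul, transpose_one,
      add_mul, mul_add, smul_mul_assoc, Matrix.mul_smul, one_mul, mul_one, smul_add,
      smul_smul]
    module
  have hNpd : ∀ l : ℝ, 0 ≤ l → (N l).PosDef := fun l hl =>
    RidgeAux.conj_posDef hCinv (hinv l hl)
  have hMN : ∀ l : ℝ, 0 ≤ l → M l = (N l)⁻¹ := by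
    intro l hl
    rw [hM, hNdef]
    rw [Matrix.mul_inv_rev, Matrix.mul_inv_rev, nonsing_inv_nonsing_inv C hCdet,
      Matrix.mul_assoc]
  have hMpd : ∀ l : ℝ, 0 ≤ l → (M l).PosDef := by
    intro l hl; rw [hMN l hl]; exact (hNpd l hl).inv
  have hMinv : ∀ l : ℝ, 0 ≤ l → (M l)⁻¹ = N l := by
    intro l hl
    rw [hMN l hl, nonsing_inv_nonsing_inv _ (hNpd l hl).det_pos.ne'.isUnit]
  constructor
  · -- monotone ⇒ S psd
    intro h
    have key : ∀ ε : ℝ, 0 < ε → (ε • S + (ε * ε) • Q).PosSemidef := by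
      intro ε hε
      have h1 := h 0 ε le_rfl hε.le
      have h2 := RidgeAux.inv_antitone (hMpd 0 le_rfl) (hMpd ε hε.le) h1
      rw [hMinv 0 le_rfl, hMinv ε hε.le, hN ε, hN 0] at h2
      have h3 : N ε - N 0 = ε • S + (ε * ε) • Q := by
        rw [hN ε, hN 0]; module
      rw [hN ε, hN 0] at h3
      rw [h3] at h2
      exact h2
    have hSH : S.IsHermitian := by
      have h1 := (key 1 one_pos).1
      have h2 : (1:ℝ) • S + ((1:ℝ) * 1) • Q = S + Q := by module
      rw [h2] at h1
      have := h1.sub hQ.1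
      simpa using this
    refine posSemidef_iff_dotProduct_mulVec.mpr ⟨hSH, fun x => ?_⟩
    set s := star x ⬝ᵥ (S *ᵥ x) with hs
    set q := star x ⬝ᵥ (Q *ᵥ x) with hq
    have hq0 : 0 ≤ q := hQ.dotProduct_mulVec_nonneg x
    by_contra hcon
    push_neg at hcon
    set ε := -s / (q + 1) with hεdef
    have hq1 : (0:ℝ) < q + 1 := by linarith
    have hε : 0 < ε := div_pos (by linarith) hq1
    have hεq : ε * (q + 1) = -s := by
      rw [hεdef]; field_simp
    have h0 : 0 ≤ ε * s + ε * ε * q := by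
      have := (key ε hε).dotProduct_mulVec_nonneg x
      simp only [star_trivial] at hs hq
      simpa [add_mulVec, smul_mulVec, dotProduct_add, dotProduct_smul,
        smul_eq_mul, mul_assoc, ← hs, ← hq] using this
    nlinarith [mul_pos hε hε]
  · -- S psd ⇒ monotone
    intro hSpsd l₁ l₂ h0 h12
    have h02 : 0 ≤ l₂ := le_trans h0 h12
    have hdiff : N l₂ - N l₁ = (l₂ - l₁) • S + (l₂ * l₂ - l₁ * l₁) • Q := by
      rw [hN l₂, hN l₁]; module
    have hpsd : (N l₂ - N l₁).PosSemidef := by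
      rw [hdiff]
      exact (RidgeAux.smul_posSemidef hSpsd (by linarith)).add
        (RidgeAux.smul_posSemidef hQ (by nlinarith))
    have h2 := RidgeAux.inv_antitone (hNpd l₂ h02) (hNpd l₁ h0) hpsd
    rwa [← hMN l₁ h0, ← hMN l₂ h02] at h2
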